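/- Let γ be a primitive element of the free group F₂ = ⟨a,b⟩ whose slope has continued fraction expansion [n₁,...,n_r], and let w_i(γ), w_i'(γ) be the standard building blocks with lengths l_i(γ), l_i'(γ). Fix α > 4 and 1 ≤ i ≤ r, and let u be any subword of γ (or of a cyclic permutation of γ) with |u| ≥ α·l_i(γ). Then, writing a cyclic permutation of γ as a word on an alphabet consisting of a cyclic permutation of w_i(γ) and an adapted cyclic permutation of w_i'(γ), the word u contains at least (α − 4)/2 full occurrences of letters from this alphabet. -/

import Mathlib

private lemma prefix_flatten_decomp {S : Type*} :
    ∀ (L : List (List S)) (u : List S), u <+: L.flatten →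
      ∃ (C : List (List S)) (s : List S), (∀ c ∈ C, c ∈ L) ∧ u = C.flatten ++ s ∧
        (s = [] ∨ ∃ b ∈ L, s <+: b) := by
  intro L
  induction L with
  | nil =>
    intro u hu
    simp only [List.flatten_nil, List.prefix_nil] at hu
    exact ⟨[], [], by simp, by simp [hu], Or.inl rfl⟩
  | cons b T ih =>
    intro u hu
    simp only [List.flatten_cons] at hu
    by_cases h : u.length ≤ b.length
    · have hub : u <+: b :=
        List.prefix_of_prefix_length_le hu (List.prefix_append b T.flatten) h
      exact ⟨[], u, by simp, by simp, Or.inr ⟨b, by simp, hub⟩⟩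
    · have hbu : b <+: u :=
        List.prefix_of_prefix_length_le (List.prefix_append b T.flatten) hu (le_of_not_ge h)
      obtain ⟨u', rfl⟩ := hbu
      have hu' : u' <+: T.flatten := (List.prefix_append_right_inj b).mp hu
      obtain ⟨C, s, hC, heq, hs⟩ := ih u' hu'
      refine ⟨b :: C, s, ?_, by simp [heq], ?_⟩
      · intro c hc
        rcases List.mem_cons.mp hc with rfl | hc
        · exact List.mem_cons_self
        · exact List.mem_cons_of_mem _ (hC c hc)
      · rcases hs with hs | ⟨b', hb', hsb⟩
        · exact Or.inl hs
        · exact Or.inr ⟨b', List.mem_cons_of_mem _ hb', hsb⟩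

private lemma infix_flatten_decomp {S : Type*} :
    ∀ (L : List (List S)) (u : List S), u <:+: L.flatten → u ≠ [] →
      (∃ b ∈ L, u <:+: b) ∨
      ∃ (p : List S) (C : List (List S)) (s : List S),
        (∀ c ∈ C, c ∈ L) ∧ u = p ++ C.flatten ++ s ∧
        (∃ b ∈ L, p <:+ b) ∧ (∃ b ∈ L, s <+: b) := by
  intro L
  induction L with
  | nil =>
    intro u hu hne
    simp only [List.flatten_nil, List.infix_nil] at hu
    exact absurd hu hne
  | cons b T ih =>
    intro u hu hne
    obtain ⟨x, y, hxy⟩ := hu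
    simp only [List.flatten_cons] at hxy
    by_cases h1 : x.length + u.length ≤ b.length
    · -- u fits inside b
      have hxu : x ++ u <+: b := by
        apply List.prefix_of_prefix_length_le _ (List.prefix_append b T.flatten)
        · simpa using h1
        · exact ⟨y, by simpa [List.append_assoc] using hxy⟩
      exact Or.inl ⟨b, by simp, (show u <:+: x ++ u from ⟨x, [], by simp⟩).trans hxu.isInfix⟩
    · by_cases h2 : b.length ≤ x.length
      · -- u lies in T.flatten
        have hbx : b <+: x := by
          apply List.prefix_of_prefix_length_le (List.prefix_append b T.flatten) _ h2
          exact ⟨u ++ y, by simpa [List.append_assoc] using hxy⟩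
        obtain ⟨x', rfl⟩ := hbx
        have hxy' : x' ++ u ++ y = T.flatten := by
          have := hxy
          simp only [List.append_assoc] at this ⊢
          exact (List.append_cancel_left this)
        rcases ih u ⟨x', y, hxy'⟩ hne with ⟨b', hb', hub'⟩ | ⟨p, C, s, hC, heq, ⟨bp, hbp, hp⟩, ⟨bs, hbs, hs⟩⟩
        · exact Or.inl ⟨b', List.mem_cons_of_mem _ hb', hub'⟩
        · exact Or.inr ⟨p, C, s, fun c hc => List.mem_cons_of_mem _ (hC c hc), heq,
            ⟨bp, List.mem_cons_of_mem _ hbp, hp⟩, ⟨bs, List.mem_cons_of_mem _ hbs, hs⟩⟩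
      · -- u straddles the boundary: x.length < b.length < x.length + u.length
        push_neg at h1 h2
        have hxb : x <+: b := by
          apply List.prefix_of_prefix_length_le _ (List.prefix_append b T.flatten) h2.le
          exact ⟨u ++ y, by simpa [List.append_assoc] using hxy⟩
        obtain ⟨p, rfl⟩ := hxb
        have hkey : u ++ y = p ++ T.flatten := by
          have := hxy
          simp only [List.append_assoc] at this
          exact List.append_cancel_left this
        have hplen : p.length ≤ u.length := by
          have : x.length + p.length < x.length + u.length := by
            simpa [List.length_append] using h1
          omega
        have hpu : p <+: u :=
          List.prefix_of_prefix_length_le ⟨T.flatten, hkey.symm⟩ ⟨y, rfl⟩ hplen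
        obtain ⟨u₂, rfl⟩ := hpu
        have hu₂ : u₂ <+: T.flatten := by
          have : p ++ (u₂ ++ y) = p ++ T.flatten := by
            simpa [List.append_assoc] using hkey
          exact ⟨y, List.append_cancel_left this⟩
        obtain ⟨C, s, hC, heq, hs⟩ := prefix_flatten_decomp T u₂ hu₂
        refine Or.inr ⟨p, C, s, fun c hc => List.mem_cons_of_mem _ (hC c hc),
          by simp [heq, List.append_assoc], ⟨x ++ p, by simp, ⟨x, rfl⟩⟩, ?_⟩
        rcases hs with rfl | ⟨b', hb', hsb⟩
        · exact ⟨x ++ p, by simp, List.nil_prefix⟩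
        · exact ⟨b', List.mem_cons_of_mem _ hb', hsb⟩

/-- Lemma on block decompositions: if `W, W'` are the (adapted cyclic permutations of the)
blocks `w_i(γ)`, `w_i'(γ)`, with `l_i = |W| ≤ |W'| ≤ 2|W|`, a cyclic permutation of the
primitive word `γ` is a concatenation `B` of blocks from `{W, W'}`, and `u` is a subword
of it with `|u| ≥ α·l_i` (`α > 4`), then `u` decomposes as a suffix of a block, at least
`(α − 4)/2` full blocks from `{W, W'}`, and a prefix of a block. -/
theorem stmt_19 {S : Type*} (W W' : List S) (hW : 0 < W.length)
    (hle : W.length ≤ W'.length) (hle2 : W'.length ≤ 2 * W.length)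
    (α : ℝ) (hα : 4 < α)
    (B : List (List S)) (hB : ∀ b ∈ B, b = W ∨ b = W')
    (u : List S) (hu : u <:+: B.flatten) (hlen : α * (W.length : ℝ) ≤ (u.length : ℝ)) :
    ∃ (p s : List S) (Cc : List (List S)),
      (∀ b ∈ Cc, b = W ∨ b = W') ∧
      u = p ++ Cc.flatten ++ s ∧
      (p <:+ W ∨ p <:+ W') ∧ (s <+: W ∨ s <+: W') ∧
      (α - 4) / 2 ≤ (Cc.length : ℝ) := by
  have hlpos : (0:ℝ) < (W.length : ℝ) := by exact_mod_cast hW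
  have hune : u ≠ [] := by
    intro h
    rw [h] at hlen
    simp only [List.length_nil, Nat.cast_zero] at hlen
    nlinarith
  -- any block has length ≤ 2 * W.length
  have hblen : ∀ b ∈ B, b.length ≤ 2 * W.length := by
    intro b hb
    rcases hB b hb with rfl | rfl
    · omega
    · exact hle2
  rcases infix_flatten_decomp B u hu hune with ⟨b, hb, hub⟩ | ⟨p, C, s, hC, heq, ⟨bp, hbp, hp⟩, ⟨bs, hbs, hs⟩⟩
  · -- impossible: u too long to fit in one block
    exfalso
    have h1 : u.length ≤ b.length := hub.length_le
    have h2 : b.length ≤ 2 * W.length := hblen b hb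
    have : (u.length : ℝ) ≤ 2 * (W.length : ℝ) := by exact_mod_cast h1.trans h2
    nlinarith
  · refine ⟨p, s, C, fun c hc => hB c (hC c hc), heq, ?_, ?_, ?_⟩
    · rcases hB bp hbp with rfl | rfl
      · exact Or.inl hp
      · exact Or.inr hp
    · rcases hB bs hbs with rfl | rfl
      · exact Or.inl hs
      · exact Or.inr hs
    · -- length count
      have hCf : C.flatten.length ≤ 2 * W.length * C.length := by
        clear heq hlen
        induction C with
        | nil => simp
        | cons c T ih =>
          have hc : c.length ≤ 2 * W.length := hblen c (hC c (by simp))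
          have hT : T.flatten.length ≤ 2 * W.length * T.length :=
            ih (fun c hc => hC c (List.mem_cons_of_mem _ hc))
          simp only [List.flatten_cons, List.length_append, List.length_cons]
          have h2 : 2 * W.length * (T.length + 1) = 2 * W.length * T.length + 2 * W.length := by
            ring
          omega
      have hpl : p.length ≤ 2 * W.length := (hp.length_le).trans (hblen bp hbp)
      have hsl : s.length ≤ 2 * W.length := (hs.length_le).trans (hblen bs hbs)
      have hul : u.length ≤ 2 * W.length * C.length + 4 * W.length := by
        rw [heq]
        simp only [List.length_append]
        omega
      have hulR : (u.length : ℝ) ≤ 2 * (W.length : ℝ) * (C.length : ℝ) + 4 * (W.length : ℝ) := by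
        exact_mod_cast hul
      have : α * (W.length : ℝ) ≤ 2 * (W.length : ℝ) * (C.length : ℝ) + 4 * (W.length : ℝ) :=
        hlen.trans hulR
      rw [div_le_iff₀ (by norm_num : (0:ℝ) < 2)]
      nlinarith
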